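/- Let d ≥ 1. There exists a constant C depending only on d such that for every z₀ ∈ ℝ × ℝ^d × ℝ^d, every r > 0, and every z = (t,x,v) ∈ Q_r(z₀), one has ∫_{Q_r(z₀)} 𝒢(t − t̃, x − x̃ − (t − t̃)ṽ, v − ṽ) dt̃ dx̃ dṽ ≤ C r². -/
import Mathlib


open Real MeasureTheory
open scoped BigOperators ENNReal

noncomputable section

abbrev E (d : ℕ) := EuclideanSpace ℝ (Fin d)
abbrev Z (d : ℕ) := ℝ × E d × E d

variable {d : ℕ}

/-- The kinetic cylinder `Q_r(z₀)`. -/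
def kCyl (r : ℝ) (z₀ : Z d) : Set (Z d) :=
  {z | z₀.1 - r ^ 2 < z.1 ∧ z.1 ≤ z₀.1 ∧
    ‖z.2.1 - z₀.2.1 - (z.1 - z₀.1) • z₀.2.2‖ < r ^ 3 ∧ ‖z.2.2 - z₀.2.2‖ < r}

/-- The Kolmogorov Green function `𝒢`. -/
def Gker (d : ℕ) (z : Z d) : ℝ :=
  if 0 < z.1 then
    (Real.sqrt 3 / (2 * π * z.1 ^ 2)) ^ d
      * Real.exp (-(3 * ‖z.2.1 + (z.1 / 2) • z.2.2‖ ^ 2) / z.1 ^ 3)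
      * Real.exp (-‖z.2.2‖ ^ 2 / (4 * z.1))
  else 0

/-- The kinetic translate `𝒢(t − t̃, x − x̃ − (t − t̃)ṽ, v − ṽ)` of the Green function. -/
def GkerKin (d : ℕ) (z w : Z d) : ℝ :=
  Gker d (z.1 - w.1, z.2.1 - w.2.1 - (z.1 - w.1) • w.2.2, z.2.2 - w.2.2)

lemma integrable_gauss {b : ℝ} (hb : 0 < b) :
    Integrable (fun v : E d => rexp (-b * ‖v‖ ^ 2)) := by
  have h := (GaussianFourier.integrable_cexp_neg_mul_sq_norm_add (V := E d)
    (b := (b : ℂ)) (by simpa using hb) 0 0).norm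
  refine h.congr (Filter.Eventually.of_forall fun v => ?_)
  simp [Complex.norm_exp, ← Complex.ofReal_pow]

lemma gauss_lintegral {b : ℝ} (hb : 0 < b) :
    ∫⁻ x : E d, ENNReal.ofReal (rexp (-b * ‖x‖ ^ 2))
      = ENNReal.ofReal ((π / b) ^ ((d : ℝ) / 2)) := by
  rw [← ofReal_integral_eq_lintegral_ofReal (integrable_gauss hb)
    (Filter.Eventually.of_forall fun v => (Real.exp_pos _).le)]
  rw [GaussianFourier.integral_rexp_neg_mul_sq_norm hb]
  norm_num [finrank_euclideanSpace_fin]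

lemma measurable_Gker : Measurable (Gker d) := by
  unfold Gker
  apply Measurable.ite (measurableSet_lt measurable_const measurable_fst)
  · apply Measurable.mul
    apply Measurable.mul
    · exact (measurable_const.div ((measurable_const.mul (measurable_fst.pow_const 2)))).pow_const d
    · apply Real.measurable_exp.comp
      apply Measurable.div _ (measurable_fst.pow_const 3)
      apply Measurable.neg
      apply Measurable.const_mul
      have hc : Continuous fun z : Z d => z.2.1 + (z.1 / 2) • z.2.2 := by fun_prop
      exact (hc.measurable.norm).pow_const 2
    · apply Real.measurable_exp.comp
      apply Measurable.div
      · exact ((measurable_snd.snd.norm).pow_const 2).neg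
      · exact measurable_const.mul measurable_fst
  · exact measurable_const

lemma gker_mass (s : ℝ) (hs : 0 < s) (x v : E d) :
    ∫⁻ p : E d × E d, ENNReal.ofReal (Gker d (s, x - p.1 - s • p.2, v - p.2)) = 1 := by
  have hmeas : Measurable fun p : E d × E d =>
      ENNReal.ofReal (Gker d (s, x - p.1 - s • p.2, v - p.2)) := by
    apply Measurable.ennreal_ofReal
    apply measurable_Gker.comp
    fun_prop
  rw [Measure.volume_eq_prod, lintegral_prod_symm _ hmeas.aemeasurable]
  set A : ℝ := (Real.sqrt 3 / (2 * π * s ^ 2)) ^ d with hA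
  have hs3 : (0:ℝ) < Real.sqrt 3 := Real.sqrt_pos.2 (by norm_num)
  have hApos : 0 < A := by positivity
  have key : ∀ vv : E d, (∫⁻ xx : E d, ENNReal.ofReal (Gker d (s, x - xx - s • vv, v - vv)))
      = ENNReal.ofReal (A * rexp (-(1/(4*s)) * ‖vv + -v‖ ^ 2))
        * ENNReal.ofReal ((π/(3/s^3)) ^ ((d:ℝ)/2)) := by
    intro vv
    set a : E d := x - s • vv + (s/2) • (v - vv) with ha
    have hG : ∀ xx : E d, Gker d (s, x - xx - s • vv, v - vv)
        = (A * rexp (-(1/(4*s)) * ‖vv + -v‖ ^ 2))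
          * rexp (-(3/s^3) * ‖xx + -a‖ ^ 2) := by
      intro xx
      have hnorm1 : x - xx - s • vv + (s/2) • (v - vv) = -(xx + -a) := by
        rw [ha]; abel
      have hnorm2 : v - vv = -(vv + -v) := by abel
      simp only [Gker, if_pos hs]
      rw [show (s, x - xx - s • vv, v - vv).2.1 + ((s, x - xx - s • vv, v - vv).1 / 2) •
            (s, x - xx - s • vv, v - vv).2.2 = x - xx - s • vv + (s/2) • (v - vv) from rfl]
      rw [hnorm1]
      rw [hnorm2]
      rw [norm_neg, norm_neg]
      rw [show -(3 * ‖xx + -a‖ ^ 2) / s ^ 3 = -(3/s^3) * ‖xx + -a‖ ^ 2 by ring]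
      rw [show -‖vv + -v‖ ^ 2 / (4 * s) = -(1/(4*s)) * ‖vv + -v‖ ^ 2 by ring]
      ring
    simp_rw [hG, ENNReal.ofReal_mul (by positivity :
      (0:ℝ) ≤ A * rexp (-(1/(4*s)) * ‖vv + -v‖ ^ 2))]
    rw [lintegral_const_mul' _ _ ENNReal.ofReal_ne_top]
    rw [lintegral_add_right_eq_self
      (fun w : E d => ENNReal.ofReal (rexp (-(3/s^3) * ‖w‖ ^ 2))) (-a)]
    rw [gauss_lintegral (by positivity)]
  simp_rw [key, ENNReal.ofReal_mul hApos.le, mul_right_comm]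
  rw [lintegral_const_mul' _ _
    (ENNReal.mul_ne_top ENNReal.ofReal_ne_top ENNReal.ofReal_ne_top)]
  rw [lintegral_add_right_eq_self
    (fun w : E d => ENNReal.ofReal (rexp (-(1/(4*s)) * ‖w‖ ^ 2))) (-v)]
  rw [gauss_lintegral (by positivity)]
  rw [← ENNReal.ofReal_mul hApos.le, ← ENNReal.ofReal_mul (by positivity)]
  have h3 : Real.sqrt 3 ^ 2 = 3 := Real.sq_sqrt (by norm_num)
  have hq : (0:ℝ) < 2 * π * s ^ 2 / Real.sqrt 3 := by positivity
  have hprod : (π/(3/s^3)) * (π/(1/(4*s))) = (2 * π * s ^ 2 / Real.sqrt 3) ^ 2 := by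
    rw [div_pow, h3]; field_simp; ring
  have hK : (π/(3/s^3)) ^ ((d:ℝ)/2) * (π/(1/(4*s))) ^ ((d:ℝ)/2)
      = (2 * π * s ^ 2 / Real.sqrt 3) ^ d := by
    rw [← Real.mul_rpow (by positivity) (by positivity), hprod,
      ← Real.rpow_natCast (2 * π * s ^ 2 / Real.sqrt 3) 2, ← Real.rpow_mul hq.le,
      show ((2:ℕ):ℝ) * ((d:ℝ)/2) = (d:ℝ) by push_cast; ring, Real.rpow_natCast]
  rw [mul_assoc, hK, hA, ← mul_pow,
    show Real.sqrt 3 / (2 * π * s ^ 2) * (2 * π * s ^ 2 / Real.sqrt 3) = 1 by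
      field_simp, one_pow, ENNReal.ofReal_one]

/-- The kinetic convolution `𝒢 ⋆ 1_{Q_r(z₀)}` is `≲_d r²` on `Q_r(z₀)`:
for every `z₀`, `r > 0` and `z ∈ Q_r(z₀)`,
`∫_{Q_r(z₀)} 𝒢(t − t̃, x − x̃ − (t − t̃)ṽ, v − ṽ) dt̃ dx̃ dṽ ≤ C r²`. -/
theorem green_convolution_indicator_bound (d : ℕ) (hd : 1 ≤ d) :
    ∃ C : ℝ, 0 < C ∧
      ∀ (z₀ : Z d) (r : ℝ), 0 < r → ∀ z ∈ kCyl r z₀,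
        ∫⁻ w in kCyl r z₀, ENNReal.ofReal (GkerKin d z w)
          ≤ ENNReal.ofReal (C * r ^ 2) := by
  refine ⟨1, one_pos, fun z₀ r hr z _hz => ?_⟩
  have hmeas : Measurable fun w : Z d => ENNReal.ofReal (GkerKin d z w) := by
    apply Measurable.ennreal_ofReal
    unfold GkerKin
    apply measurable_Gker.comp
    fun_prop
  have hsub : kCyl r z₀ ⊆ (Set.Ioc (z₀.1 - r ^ 2) z₀.1) ×ˢ (Set.univ : Set (E d × E d)) :=
    fun w hw => ⟨⟨hw.1, hw.2.1⟩, trivial⟩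
  calc ∫⁻ w in kCyl r z₀, ENNReal.ofReal (GkerKin d z w)
      ≤ ∫⁻ w in (Set.Ioc (z₀.1 - r ^ 2) z₀.1) ×ˢ (Set.univ : Set (E d × E d)),
          ENNReal.ofReal (GkerKin d z w) := lintegral_mono_set hsub
    _ = ∫⁻ t in Set.Ioc (z₀.1 - r ^ 2) z₀.1,
          ∫⁻ p : E d × E d, ENNReal.ofReal (GkerKin d z (t, p)) := by
        rw [Measure.volume_eq_prod, ← Measure.prod_restrict, Measure.restrict_univ,
          lintegral_prod _ hmeas.aemeasurable]
    _ ≤ ∫⁻ _t in Set.Ioc (z₀.1 - r ^ 2) z₀.1, (1 : ℝ≥0∞) := by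
        apply lintegral_mono
        intro t
        rcases lt_or_ge t z.1 with h | h
        · have hpos : 0 < z.1 - t := by linarith
          have := gker_mass (z.1 - t) hpos z.2.1 z.2.2
          exact le_of_eq (this ▸ rfl)
        · have hzero : ∀ p : E d × E d, GkerKin d z (t, p) = 0 := by
            intro p
            unfold GkerKin Gker
            rw [if_neg]
            simp only
            linarith
          simp [hzero]
    _ = ENNReal.ofReal (1 * r ^ 2) := by
        rw [setLIntegral_const, Real.volume_Ioc, one_mul, one_mul]
        congr 1
        ring
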